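/- Let k ≤ m ≤ n and 1 ≤ l ≤ m with k ≤ m − l. For positive reals r_1,…,r_m and c_1,…,c_n, the limit of F(k,r_1,…,r_m,c_1,…,c_n) as r_1,…,r_l all tend to 0 from above equals F(k,r_{l+1},…,r_m,c_1,…,c_n). -/

import Mathlib

open Filter

/-- The conjectured formula `F(k,r,c)` for the expected minimum `k`-assignment of a random
exponential matrix with rank 1 rate matrix `(r i * c j)`: the sum over proper subsets
`I ⊊ {1,…,m}` and `J ⊊ {1,…,n}` with `|I| + |J| < k` of
`(−1)^{k−1−|I|−|J|} · C(m+n−1−|I|−|J|, k−1−|I|−|J|) / ((∑_{i∉I} r i)(∑_{j∉J} c j))`. -/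
noncomputable def F (k : ℕ) {m n : ℕ} (r : Fin m → ℝ) (c : Fin n → ℝ) : ℝ :=
  ∑ I : Finset (Fin m), ∑ J : Finset (Fin n),
    if I ≠ Finset.univ ∧ J ≠ Finset.univ ∧ I.card + J.card < k then
      (-1 : ℝ) ^ (k - 1 - I.card - J.card) *
        ((m + n - 1 - I.card - J.card).choose (k - 1 - I.card - J.card) : ℝ) /
        ((∑ i ∈ Iᶜ, r i) * (∑ j ∈ Jᶜ, c j))
    else 0

lemma key_id (l M K : ℕ) (h : l + K ≤ M) :
    ∑ a ∈ Finset.range (l + 1),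
      (l.choose a : ℝ) *
        (if a ≤ K then (-1 : ℝ) ^ (K - a) * ((M - a).choose (K - a) : ℝ) else 0)
    = (-1 : ℝ) ^ K * ((M - l).choose K : ℝ) := by
  induction l generalizing M K with
  | zero => simp
  | succ l ih =>
    have hM : l + K ≤ M := by omega
    set g : ℕ → ℕ → ℕ → ℝ := fun M K a =>
      if a ≤ K then (-1 : ℝ) ^ (K - a) * ((M - a).choose (K - a) : ℝ) else 0 with hg
    have hsplit : ∑ a ∈ Finset.range (l + 2), ((l+1).choose a : ℝ) * g M K a
        = (∑ a ∈ Finset.range (l + 1), (l.choose a : ℝ) * g M K a)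
          + ∑ b ∈ Finset.range (l + 1), (l.choose b : ℝ) * g M K (b + 1) := by
      rw [Finset.sum_range_succ' (fun a => ((l+1).choose a : ℝ) * g M K a) (l+1)]
      have : ∀ b, (((l+1).choose (b+1) : ℕ) : ℝ) = (l.choose b : ℝ) + (l.choose (b+1) : ℝ) := by
        intro b; rw [Nat.choose_succ_succ]; push_cast; ring
      simp_rw [this, add_mul]
      rw [Finset.sum_add_distrib]
      have h1 : (∑ b ∈ Finset.range (l + 1), (l.choose (b+1) : ℝ) * g M K (b+1))
          + ((l+1).choose 0 : ℝ) * g M K 0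
          = ∑ a ∈ Finset.range (l + 2), (l.choose a : ℝ) * g M K a := by
        rw [Finset.sum_range_succ' (fun a => (l.choose a : ℝ) * g M K a) (l+1)]
        simp
      have h2 : ∑ a ∈ Finset.range (l + 2), (l.choose a : ℝ) * g M K a
          = ∑ a ∈ Finset.range (l + 1), (l.choose a : ℝ) * g M K a := by
        rw [Finset.sum_range_succ]
        simp [Nat.choose_succ_self]
      linarith [h1, h2]
    rw [hsplit, ih M K hM]
    rcases Nat.eq_zero_or_pos K with hK | hK
    · subst hK
      have : ∀ b ∈ Finset.range (l+1), (l.choose b : ℝ) * g M 0 (b+1) = 0 := by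
        intro b _; simp [hg]
      rw [Finset.sum_congr rfl this]
      simp
    · obtain ⟨K', rfl⟩ : ∃ K', K = K' + 1 := ⟨K - 1, by omega⟩
      have hgs : ∀ b, g M (K' + 1) (b + 1) = g (M - 1) K' b := by
        intro b
        simp only [hg]
        have e1 : K' + 1 - (b + 1) = K' - b := by omega
        have e2 : M - (b + 1) = M - 1 - b := by omega
        rw [e1, e2]
        simp
      simp_rw [hgs]
      rw [ih (M - 1) K' (by omega)]
      have e4 : M - 1 - l = M - (l + 1) := by omega
      have e5 : M - l = (M - (l+1)) + 1 := by omega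
      rw [e4, e5, Nat.choose_succ_succ]
      push_cast
      ring

lemma F_eq {k m n : ℕ} (hkm : k ≤ m) (hkn : k ≤ n) (r : Fin m → ℝ) (c : Fin n → ℝ) :
    F k r c = ∑ I : Finset (Fin m), ∑ J : Finset (Fin n),
      if I.card + J.card < k then
        (-1 : ℝ) ^ (k - 1 - I.card - J.card) *
          ((m + n - 1 - I.card - J.card).choose (k - 1 - I.card - J.card) : ℝ) /
          ((∑ i ∈ Iᶜ, r i) * (∑ j ∈ Jᶜ, c j))
      else 0 := by
  unfold F
  refine Finset.sum_congr rfl fun I _ => Finset.sum_congr rfl fun J _ => ?_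
  refine if_congr ⟨fun h => h.2.2, fun h => ⟨?_, ?_, h⟩⟩ rfl rfl
  · intro he
    have h1 : I.card = m := by rw [he, Finset.card_univ, Fintype.card_fin]
    omega
  · intro he
    have h1 : J.card = n := by rw [he, Finset.card_univ, Fintype.card_fin]
    omega

lemma sum_split (l m : ℕ) (h : l + (m - l) = m) (f : Finset (Fin m) → ℝ) :
    ∑ I : Finset (Fin m), f I =
    ∑ B : Finset (Fin (m - l)), ∑ A : Finset (Fin l),
      f ((A.disjSum B).map (finSumFinEquiv.trans (finCongr h)).toEmbedding) := by
  have hb : Function.Bijective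
      (fun p : Finset (Fin (m - l)) × Finset (Fin l) =>
        (p.2.disjSum p.1).map (finSumFinEquiv.trans (finCongr h)).toEmbedding) := by
    rw [Fintype.bijective_iff_injective_and_card]
    constructor
    · intro p q hpq
      have h2 := Finset.map_injective _ hpq
      rw [Finset.disjSum_inj] at h2
      exact Prod.ext h2.2 h2.1
    · simp only [Fintype.card_prod, Fintype.card_finset, Fintype.card_fin]
      rw [← pow_add]
      congr 1
      omega
  rw [← Fintype.sum_bijective _ hb
    (fun p : Finset (Fin (m - l)) × Finset (Fin l) =>
      f ((p.2.disjSum p.1).map (finSumFinEquiv.trans (finCongr h)).toEmbedding))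
    f (fun p => rfl)]
  rw [Fintype.sum_prod_type]

theorem F_limit_small_k (k m n l : ℕ) (hk : 0 < k) (hl : 1 ≤ l) (hlm : l ≤ m)
    (hkml : k ≤ m - l) (hmn : m ≤ n)
    (r : Fin m → ℝ) (c : Fin n → ℝ) (hr : ∀ i, 0 < r i) (hc : ∀ j, 0 < c j) :
    Tendsto
      (fun ρ : Fin l → ℝ =>
        F k (fun i : Fin m => if h : (i : ℕ) < l then ρ ⟨i, h⟩ else r i) c)
      (nhdsWithin 0 {ρ | ∀ i, 0 < ρ i})
      (nhds (F k (fun i : Fin (m - l) => r ⟨(i : ℕ) + l, by have := i.isLt; omega⟩) c)) := by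
  have hkm : k ≤ m := by omega
  have hkn : k ≤ n := by omega
  have hm : l + (m - l) = m := by omega
  set r0 : Fin m → ℝ := fun i => if (i : ℕ) < l then 0 else r i with hr0
  set e : Fin l ⊕ Fin (m - l) ≃ Fin m := finSumFinEquiv.trans (finCongr hm) with he
  have he1 : ∀ a : Fin l, ((e (Sum.inl a)) : ℕ) = (a : ℕ) := by
    intro a; simp [he]
  have he2 : ∀ b : Fin (m - l), ((e (Sum.inr b)) : ℕ) = l + (b : ℕ) := by
    intro b; simp [he]
  -- The combinatorial identity
  have key2 : F k (fun i : Fin (m - l) => r ⟨(i : ℕ) + l, by have := i.isLt; omega⟩) c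
      = F k r0 c := by
    rw [F_eq hkml hkn, F_eq hkm hkn, sum_split l m hm]
    refine Finset.sum_congr rfl fun B _ => Eq.symm ?_
    rw [Finset.sum_comm]
    refine Finset.sum_congr rfl fun J _ => ?_
    -- compute the complement sum, independent of A
    have hcompl : ∀ A : Finset (Fin l),
        ((A.disjSum B).map e.toEmbedding)ᶜ = (Aᶜ.disjSum Bᶜ).map e.toEmbedding := by
      intro A
      ext i
      obtain ⟨x, rfl⟩ := e.surjective i
      rw [Finset.mem_compl]
      simp only [Finset.mem_map_equiv, Equiv.symm_apply_apply]
      cases x <;> simp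
    have hDsum : ∀ A : Finset (Fin l),
        ∑ i ∈ ((A.disjSum B).map e.toEmbedding)ᶜ, r0 i
          = ∑ b ∈ Bᶜ, r ⟨(b : ℕ) + l, by have := b.isLt; omega⟩ := by
      intro A
      rw [hcompl A, Finset.sum_map, Finset.sum_disjSum]
      have hz : ∀ a ∈ Aᶜ, r0 (e.toEmbedding (Sum.inl a)) = 0 := by
        intro a _
        have : ((e (Sum.inl a)) : ℕ) < l := by rw [he1]; exact a.isLt
        simp only [hr0, Equiv.coe_toEmbedding]
        rw [if_pos this]
      rw [Finset.sum_congr rfl hz, Finset.sum_const_zero, zero_add]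
      refine Finset.sum_congr rfl fun b _ => ?_
      have hval : ((e (Sum.inr b)) : ℕ) = (b : ℕ) + l := by rw [he2]; omega
      simp only [hr0, Equiv.coe_toEmbedding]
      rw [if_neg (by omega)]
      congr 1
      exact Fin.ext hval
    have hcard : ∀ A : Finset (Fin l),
        ((A.disjSum B).map e.toEmbedding).card = A.card + B.card := by
      intro A; rw [Finset.card_map, Finset.card_disjSum]
    -- now reduce to a sum over cardinalities
    set D : ℝ := ∑ b ∈ Bᶜ, r ⟨(b : ℕ) + l, by have := b.isLt; omega⟩ with hD
    set C : ℝ := ∑ j ∈ Jᶜ, c j with hC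
    set s := B.card with hs
    set t := J.card with ht
    have hterm : ∀ A : Finset (Fin l),
        (if ((A.disjSum B).map e.toEmbedding).card + J.card < k then
          (-1 : ℝ) ^ (k - 1 - ((A.disjSum B).map e.toEmbedding).card - J.card) *
            ((m + n - 1 - ((A.disjSum B).map e.toEmbedding).card - J.card).choose
              (k - 1 - ((A.disjSum B).map e.toEmbedding).card - J.card) : ℝ) /
            ((∑ i ∈ ((A.disjSum B).map e.toEmbedding)ᶜ, r0 i) * (∑ j ∈ Jᶜ, c j))
        else 0)
        = (if A.card ≤ k - 1 - s - t ∧ s + t < k then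
            (-1 : ℝ) ^ (k - 1 - s - t - A.card) *
              ((m + n - 1 - s - t - A.card).choose (k - 1 - s - t - A.card) : ℝ)
          else 0) / (D * C) := by
      intro A
      rw [hcard A, hDsum A, ← hC]
      by_cases hA : A.card + s + J.card < k
      · rw [if_pos hA, if_pos (show A.card ≤ k - 1 - s - t ∧ s + t < k by omega)]
        have e1 : k - 1 - (A.card + s) - J.card = k - 1 - s - t - A.card := by omega
        have e2 : m + n - 1 - (A.card + s) - J.card = m + n - 1 - s - t - A.card := by
          omega
        rw [e1, e2]
      · rw [if_neg hA, if_neg (show ¬(A.card ≤ k - 1 - s - t ∧ s + t < k) by omega),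
          zero_div]
    refine Eq.trans (Finset.sum_congr rfl fun A _ => hterm A) ?_
    rw [← Finset.sum_div]
    -- sum over cardinalities
    have hpow : ∑ A : Finset (Fin l),
        (if A.card ≤ k - 1 - s - t ∧ s + t < k then
          (-1 : ℝ) ^ (k - 1 - s - t - A.card) *
            ((m + n - 1 - s - t - A.card).choose (k - 1 - s - t - A.card) : ℝ)
        else 0)
        = ∑ a ∈ Finset.range (l + 1), (l.choose a : ℝ) *
            (if a ≤ k - 1 - s - t ∧ s + t < k then
              (-1 : ℝ) ^ (k - 1 - s - t - a) *
                ((m + n - 1 - s - t - a).choose (k - 1 - s - t - a) : ℝ)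
            else 0) := by
      rw [← Finset.powerset_univ, Finset.sum_powerset]
      rw [Finset.card_univ, Fintype.card_fin]
      refine Finset.sum_congr rfl fun a _ => ?_
      rw [Finset.sum_congr rfl (fun A hA => by
        rw [(Finset.mem_powersetCard.1 hA).2]), Finset.sum_const,
        Finset.card_powersetCard, Finset.card_univ, Fintype.card_fin, nsmul_eq_mul]
    rw [hpow]
    by_cases hst : s + t < k
    · have hid := key_id l (m + n - 1 - s - t) (k - 1 - s - t) (by omega)
      have : ∀ a ∈ Finset.range (l + 1),
          (l.choose a : ℝ) *
            (if a ≤ k - 1 - s - t ∧ s + t < k then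
              (-1 : ℝ) ^ (k - 1 - s - t - a) *
                ((m + n - 1 - s - t - a).choose (k - 1 - s - t - a) : ℝ)
            else 0)
          = (l.choose a : ℝ) *
            (if a ≤ k - 1 - s - t then
              (-1 : ℝ) ^ (k - 1 - s - t - a) *
                ((m + n - 1 - s - t - a).choose (k - 1 - s - t - a) : ℝ)
            else 0) := by
        intro a _
        congr 1
        by_cases hak : a ≤ k - 1 - s - t
        · rw [if_pos ⟨hak, hst⟩, if_pos hak]
        · rw [if_neg (fun hh => hak hh.1), if_neg hak]
      rw [Finset.sum_congr rfl this, hid]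
      rw [if_pos hst]
      have e3 : m + n - 1 - s - t - l = m - l + n - 1 - s - t := by omega
      rw [e3]
    · rw [if_neg hst]
      rw [Finset.sum_congr rfl (fun a _ => by
        rw [if_neg (fun hh => hst hh.2), mul_zero]), Finset.sum_const_zero, zero_div]
  rw [key2]
  -- the analytic part
  refine Tendsto.mono_left ?_ nhdsWithin_le_nhds
  unfold F
  refine tendsto_finset_sum _ fun I _ => tendsto_finset_sum _ fun J _ => ?_
  by_cases hIJ : I ≠ Finset.univ ∧ J ≠ Finset.univ ∧ I.card + J.card < k
  · simp only [if_pos hIJ]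
    obtain ⟨-, -, hcard⟩ := hIJ
    have hD : Tendsto
        (fun ρ : Fin l → ℝ => ∑ i ∈ Iᶜ, (if h : (i : ℕ) < l then ρ ⟨i, h⟩ else r i))
        (nhds 0) (nhds (∑ i ∈ Iᶜ, r0 i)) := by
      refine tendsto_finset_sum _ fun i _ => ?_
      by_cases hi : (i : ℕ) < l
      · simp only [dif_pos hi, hr0, if_pos hi]
        have := (continuous_apply (⟨(i : ℕ), hi⟩ : Fin l)).tendsto (0 : Fin l → ℝ)
        simpa using this
      · simp only [dif_neg hi, hr0, if_neg hi]
        exact tendsto_const_nhds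
    have hex : ∃ i₀ ∈ Iᶜ, ¬ ((i₀ : ℕ) < l) := by
      by_contra hcon
      push_neg at hcon
      have hle : Iᶜ.card ≤ (Finset.range l).card := by
        exact Finset.card_le_card_of_injOn (fun i => (i : ℕ))
          (fun i hi => Finset.mem_range.2 (hcon i hi))
          (fun a _ b _ hab => Fin.ext hab)
      rw [Finset.card_range, Finset.card_compl, Fintype.card_fin] at hle
      omega
    obtain ⟨i₀, hi₀, hi₀l⟩ := hex
    have hpos : 0 < ∑ i ∈ Iᶜ, r0 i := by
      refine Finset.sum_pos' (fun i _ => ?_) ⟨i₀, hi₀, ?_⟩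
      · simp only [hr0]
        split
        · exact le_refl 0
        · exact (hr i).le
      · simp only [hr0, if_neg hi₀l]
        exact hr i₀
    have hCpos : 0 < ∑ j ∈ Jᶜ, c j := by
      refine Finset.sum_pos (fun j _ => hc j) ?_
      rw [← Finset.card_pos, Finset.card_compl, Fintype.card_fin]
      omega
    exact tendsto_const_nhds.div (hD.mul tendsto_const_nhds)
      (ne_of_gt (mul_pos hpos hCpos))
  · simp only [if_neg hIJ]
    exact tendsto_const_nhds
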